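/- Consider the action of SL(2,ℝ) on pairs of real 2×2 symmetric positive-definite matrices given by g.(θ,θ′) = (g⁻ᵀθg⁻¹, g⁻ᵀθ′g⁻¹), and the map S(θ,θ′) = (det θ, det θ′, tr(θ′θ⁻¹)). Then S is a maximal invariant: (i) S(g⁻ᵀθg⁻¹, g⁻ᵀθ′g⁻¹) = S(θ,θ′) for every g ∈ SL(2,ℝ); and (ii) whenever S(θ₁,θ₂) = S(θ₁′,θ₂′) there exists g ∈ SL(2,ℝ) with θ₁′ = g⁻ᵀθ₁g⁻¹ and θ₂′ = g⁻ᵀθ₂g⁻¹. -/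

import Mathlib

open Matrix

private lemma posdef_00 (M : Matrix (Fin 2) (Fin 2) ℝ) (h : M.PosDef) : 0 < M 0 0 := by
  exact h.diag_pos

private lemma sym_entry (M : Matrix (Fin 2) (Fin 2) ℝ) (h : M.IsHermitian) :
    M 1 0 = M 0 1 := by
  have := congr_fun (congr_fun h.eq 0) 1
  simpa [Matrix.conjTranspose_apply] using this

private lemma sym_tr (M : Matrix (Fin 2) (Fin 2) ℝ) (h : M.IsHermitian) : Mᵀ = M := by
  ext i j
  have := congr_fun (congr_fun h.eq i) j
  simpa [Matrix.conjTranspose_apply] using this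

/-- Cholesky-type reduction: any 2×2 posdef θ is SL(2)-congruent to √(det θ) • 1. -/
private lemma chol (θ : Matrix (Fin 2) (Fin 2) ℝ) (hθ : θ.PosDef) :
    ∃ k : Matrix (Fin 2) (Fin 2) ℝ, k.det = 1 ∧
      k * θ * kᵀ = Real.sqrt θ.det • (1 : Matrix (Fin 2) (Fin 2) ℝ) := by
  have hsym : θ 1 0 = θ 0 1 := sym_entry θ hθ.1
  set a := θ 0 0 with ha'
  set b := θ 0 1 with hb'
  set c := θ 1 1 with hc'
  have ha : 0 < a := posdef_00 θ hθ
  have hd : 0 < θ.det := hθ.det_pos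
  set s := Real.sqrt θ.det with hs'
  have hs : 0 < s := Real.sqrt_pos.2 hd
  have hs2 : s ^ 2 = a * c - b ^ 2 := by
    rw [hs', Real.sq_sqrt hd.le, Matrix.det_fin_two, hsym]; ring
  set w := Real.sqrt (a * s) with hw'
  have hw : 0 < w := Real.sqrt_pos.2 (by positivity)
  have hw2 : w ^ 2 = a * s := Real.sq_sqrt (by positivity)
  clear_value a b c s w
  set B : Matrix (Fin 2) (Fin 2) ℝ := !![s, 0; -b, a] with hB
  have htB : Bᵀ = !![s, -b; 0, a] := by
    rw [hB]; ext i j; fin_cases i <;> fin_cases j <;> rfl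
  have hBθ : B * θ * Bᵀ = (w ^ 2 * s) • (1 : Matrix (Fin 2) (Fin 2) ℝ) := by
    rw [hB, htB, Matrix.eta_fin_two θ, hsym, ← ha', ← hb', ← hc',
      Matrix.mul_fin_two, Matrix.mul_fin_two, hw2]
    ext i j
    fin_cases i <;> fin_cases j <;>
      (try simp [Matrix.smul_apply, Matrix.one_apply]) <;>
      (first
        | exact Or.inl trivial
        | exact Or.inl (by ring)
        | tauto
        | linear_combination
        | linear_combination (-s) * hw2
        | linear_combination (-a) * hs2 - s * hw2
        | linear_combination a * hs2
        | linear_combination (-a) * hs2)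
  refine ⟨w⁻¹ • B, ?_, ?_⟩
  · rw [Matrix.det_smul, hB, Matrix.det_fin_two_of, Fintype.card_fin]
    field_simp
    linarith [hw2]
  · rw [Matrix.transpose_smul, Matrix.smul_mul, Matrix.smul_mul, Matrix.mul_smul,
      smul_smul, hBθ, smul_smul]
    congr 1
    field_simp

noncomputable def lamEV (M : Matrix (Fin 2) (Fin 2) ℝ) : ℝ :=
  (M.trace + Real.sqrt (M.trace ^ 2 - 4 * M.det)) / 2

/-- Orthogonal diagonalization of a 2×2 symmetric matrix. -/
private lemma diagq (M : Matrix (Fin 2) (Fin 2) ℝ) (hM : M 1 0 = M 0 1) :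
    ∃ O : Matrix (Fin 2) (Fin 2) ℝ, O.det = 1 ∧ Oᵀ * O = 1 ∧
      O * M * Oᵀ = !![lamEV M, 0; 0, M.trace - lamEV M] := by
  set a := M 0 0 with ha'
  set b := M 0 1 with hb'
  set c := M 1 1 with hc'
  have htr : M.trace = a + c := Matrix.trace_fin_two M
  have hdet : M.det = a * c - b ^ 2 := by rw [Matrix.det_fin_two, hM]; ring
  have hD0 : 0 ≤ M.trace ^ 2 - 4 * M.det := by
    rw [htr, hdet]; nlinarith [sq_nonneg (a - c), sq_nonneg b]
  have hDval : M.trace ^ 2 - 4 * M.det = (a - c) ^ 2 + 4 * b ^ 2 := by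
    rw [htr, hdet]; ring
  set lam := lamEV M with hlam'
  have hlamsq : (2 * lam - (a + c)) ^ 2 = (a - c) ^ 2 + 4 * b ^ 2 := by
    have h2 : 2 * lam - (a + c) = Real.sqrt (M.trace ^ 2 - 4 * M.det) := by
      rw [hlam', lamEV, htr]; ring
    rw [h2, Real.sq_sqrt hD0, hDval]
  have hb2 : (lam - a) * (lam - c) = b ^ 2 := by linear_combination hlamsq / 4
  rcases eq_or_ne b 0 with hb | hb
  · -- b = 0 : M is diagonal
    have hMdiag : M = !![a, 0; 0, c] := by
      rw [Matrix.eta_fin_two M, hM, ← ha', ← hb', ← hc', hb]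
    rcases le_or_gt c a with hac | hac
    · have hlama : lam = a := by
        have h1 : Real.sqrt (M.trace ^ 2 - 4 * M.det) = a - c := by
          rw [hDval, hb, show (a-c)^2 + 4*(0:ℝ)^2 = (a-c)^2 by ring]
          exact Real.sqrt_sq (by linarith)
        rw [hlam', lamEV, h1, htr]; ring
      refine ⟨1, by simp, by simp, ?_⟩
      rw [Matrix.transpose_one, Matrix.mul_one, Matrix.one_mul, htr, hlama, hMdiag]
      ext i j; fin_cases i <;> fin_cases j <;> simp <;> ring
    · have hlamc : lam = c := by
        have h1 : Real.sqrt (M.trace ^ 2 - 4 * M.det) = c - a := by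
          rw [hDval, hb, show (a-c)^2 + 4*(0:ℝ)^2 = (c-a)^2 by ring]
          exact Real.sqrt_sq (by linarith)
        rw [hlam', lamEV, h1, htr]; ring
      have htro : (!![(0:ℝ), 1; -1, 0])ᵀ = !![0, -1; 1, 0] := by
        ext i j; fin_cases i <;> fin_cases j <;> rfl
      refine ⟨!![0, 1; -1, 0], by simp [Matrix.det_fin_two_of], ?_, ?_⟩
      · rw [htro, Matrix.mul_fin_two, Matrix.one_fin_two]
        ext i j; fin_cases i <;> fin_cases j <;> simp
      · rw [htro, hlamc, htr, hMdiag, Matrix.mul_fin_two, Matrix.mul_fin_two]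
        ext i j; fin_cases i <;> fin_cases j <;> simp <;> ring
  · -- b ≠ 0 : explicit rotation from eigenvector (b, lam - a)
    set n := b ^ 2 + (lam - a) ^ 2 with hn'
    have hn : 0 < n := by positivity
    set r := Real.sqrt n with hr'
    have hr : 0 < r := Real.sqrt_pos.2 hn
    have hrn : r ^ 2 = b ^ 2 + (lam - a) ^ 2 := by rw [hr', Real.sq_sqrt hn.le]
    clear_value lam n r
    clear_value a b c
    set C : Matrix (Fin 2) (Fin 2) ℝ := !![b, lam - a; -(lam - a), b] with hC
    have htC : Cᵀ = !![b, -(lam - a); lam - a, b] := by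
      rw [hC]; ext i j; fin_cases i <;> fin_cases j <;> rfl
    have hCC : Cᵀ * C = (r ^ 2) • (1 : Matrix (Fin 2) (Fin 2) ℝ) := by
      rw [hC, htC, Matrix.mul_fin_two]
      ext i j
      fin_cases i <;> fin_cases j <;>
        (try simp [Matrix.smul_apply, Matrix.one_apply]) <;>
        (first
          | exact Or.inl trivial
          | tauto
          | linear_combination
          | linear_combination hrn
          | linear_combination (-1 : ℝ) * hrn)
    have hCM : C * M * Cᵀ = (r ^ 2) • !![lam, 0; 0, a + c - lam] := by
      rw [hC, htC, Matrix.eta_fin_two M, hM, ← ha', ← hb', ← hc',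
        Matrix.mul_fin_two, Matrix.mul_fin_two]
      ext i j
      fin_cases i <;> fin_cases j <;>
        (try simp [Matrix.smul_apply, Matrix.one_apply]) <;>
        (first
          | exact Or.inl trivial
          | tauto
          | linear_combination
          | linear_combination (a - lam) * hb2 - lam * hrn
          | linear_combination (lam - a) * hb2 + lam * hrn
          | linear_combination (-b) * hb2
          | linear_combination b * hb2
          | linear_combination (lam - a) * hb2 - (a + c - lam) * hrn
          | linear_combination (a - lam) * hb2 + (a + c - lam) * hrn)
    refine ⟨r⁻¹ • C, ?_, ?_, ?_⟩
    · rw [Matrix.det_smul, hC, Matrix.det_fin_two_of, Fintype.card_fin]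
      field_simp
      linarith [hrn]
    · rw [Matrix.transpose_smul, Matrix.smul_mul, Matrix.mul_smul, smul_smul, hCC,
        smul_smul]
      have h9 : r⁻¹ * r⁻¹ * r ^ 2 = 1 := by field_simp
      rw [h9, one_smul]
    · rw [htr, Matrix.transpose_smul, Matrix.smul_mul, Matrix.smul_mul, Matrix.mul_smul,
        smul_smul, hCM, smul_smul]
      have h9 : r⁻¹ * r⁻¹ * r ^ 2 = 1 := by field_simp
      rw [h9, one_smul]

/-- Two symmetric 2×2 matrices with the same trace and determinant are
conjugate by a special orthogonal matrix. -/
private lemma rot (M M' : Matrix (Fin 2) (Fin 2) ℝ)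
    (hM : M 1 0 = M 0 1) (hM' : M' 1 0 = M' 0 1)
    (htr : M.trace = M'.trace) (hdet : M.det = M'.det) :
    ∃ O : Matrix (Fin 2) (Fin 2) ℝ, O.det = 1 ∧ Oᵀ * O = 1 ∧ O * M * Oᵀ = M' := by
  obtain ⟨O, hdO, hOO, hOM⟩ := diagq M hM
  obtain ⟨O', hdO', hOO', hOM'⟩ := diagq M' hM'
  have hlam : lamEV M = lamEV M' := by rw [lamEV, lamEV, htr, hdet]
  have hOO'2 : O' * O'ᵀ = 1 := mul_eq_one_comm.2 hOO'
  refine ⟨O'ᵀ * O, by rw [Matrix.det_mul, Matrix.det_transpose, hdO, hdO']; ring, ?_, ?_⟩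
  · have h1 : (O'ᵀ * O)ᵀ * (O'ᵀ * O) = Oᵀ * (O' * O'ᵀ) * O := by
      rw [Matrix.transpose_mul, Matrix.transpose_transpose]; noncomm_ring
    rw [h1, hOO'2, Matrix.mul_one, hOO]
  · have h1 : (O'ᵀ * O)ᵀ = Oᵀ * O' := by
      rw [Matrix.transpose_mul, Matrix.transpose_transpose]
    rw [h1]
    have h2 : O'ᵀ * O * M * (Oᵀ * O') = O'ᵀ * (O * M * Oᵀ) * O' := by noncomm_ring
    rw [h2, hOM, hlam, htr, ← hOM']
    calc O'ᵀ * (O' * M' * O'ᵀ) * O' = (O'ᵀ * O') * M' * (O'ᵀ * O') := by noncomm_ring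
      _ = M' := by rw [hOO', Matrix.one_mul, Matrix.mul_one]

private lemma trace_key (θ₁ θ₂ k : Matrix (Fin 2) (Fin 2) ℝ) (s : ℝ) (hs : s ≠ 0)
    (hdk : IsUnit k.det) (hk : k * θ₁ * kᵀ = s • 1) :
    (k * θ₂ * kᵀ).trace = s * (θ₂ * θ₁⁻¹).trace := by
  have hdkt : IsUnit kᵀ.det := by rwa [Matrix.det_transpose]
  have hθ₁ : θ₁ = k⁻¹ * (s • 1) * (kᵀ)⁻¹ := by
    rw [← hk]
    calc θ₁ = (k⁻¹ * k) * θ₁ * (kᵀ * (kᵀ)⁻¹) := by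
          rw [Matrix.nonsing_inv_mul k hdk, Matrix.mul_nonsing_inv kᵀ hdkt]
          noncomm_ring
    _ = k⁻¹ * (k * θ₁ * kᵀ) * (kᵀ)⁻¹ := by noncomm_ring
  have hsinv : (s • (1 : Matrix (Fin 2) (Fin 2) ℝ))⁻¹ = s⁻¹ • 1 := by
    apply Matrix.inv_eq_left_inv
    rw [Matrix.smul_mul, Matrix.mul_smul, smul_smul, inv_mul_cancel₀ hs, Matrix.mul_one,
      one_smul]
  have hθ₁inv : θ₁⁻¹ = kᵀ * (s⁻¹ • 1) * k := by
    rw [hθ₁, Matrix.mul_inv_rev, Matrix.mul_inv_rev, hsinv,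
      Matrix.nonsing_inv_nonsing_inv kᵀ hdkt, Matrix.nonsing_inv_nonsing_inv k hdk,
      Matrix.mul_assoc]
  rw [hθ₁inv]
  have h1 : θ₂ * (kᵀ * (s⁻¹ • 1) * k) = s⁻¹ • ((θ₂ * kᵀ) * k) := by
    rw [Matrix.mul_smul, Matrix.smul_mul, Matrix.mul_one]
    noncomm_ring
  rw [h1, Matrix.trace_smul, smul_eq_mul, Matrix.trace_mul_comm (θ₂ * kᵀ) k,
    ← Matrix.mul_assoc, ← mul_assoc, mul_inv_cancel₀ hs, one_mul]

/-- `S(θ,θ′) = (det θ, det θ′, tr(θ′θ⁻¹))` is a maximal invariant for the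
action `g.(θ,θ′) = (g⁻ᵀθg⁻¹, g⁻ᵀθ′g⁻¹)` of `SL(2,ℝ)` on pairs of symmetric
positive-definite 2×2 real matrices. -/
theorem maximal_invariant_SL2 :
    (∀ g θ θ' : Matrix (Fin 2) (Fin 2) ℝ, g.det = 1 → θ.PosDef → θ'.PosDef →
      ((g⁻¹)ᵀ * θ * g⁻¹).det = θ.det ∧ ((g⁻¹)ᵀ * θ' * g⁻¹).det = θ'.det ∧
        (((g⁻¹)ᵀ * θ' * g⁻¹) * ((g⁻¹)ᵀ * θ * g⁻¹)⁻¹).trace = (θ' * θ⁻¹).trace) ∧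
    (∀ θ₁ θ₂ θ₁' θ₂' : Matrix (Fin 2) (Fin 2) ℝ,
      θ₁.PosDef → θ₂.PosDef → θ₁'.PosDef → θ₂'.PosDef →
      θ₁.det = θ₁'.det → θ₂.det = θ₂'.det →
      (θ₂ * θ₁⁻¹).trace = (θ₂' * θ₁'⁻¹).trace →
      ∃ g : Matrix (Fin 2) (Fin 2) ℝ, g.det = 1 ∧
        (g⁻¹)ᵀ * θ₁ * g⁻¹ = θ₁' ∧ (g⁻¹)ᵀ * θ₂ * g⁻¹ = θ₂') := by
  constructor
  · intro g θ θ' hg hθ hθ'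
    have hug : IsUnit g.det := by rw [hg]; exact isUnit_one
    have hugt : IsUnit gᵀ.det := by rwa [Matrix.det_transpose]
    have hdetinv : (g⁻¹).det = 1 := by
      rw [Matrix.det_nonsing_inv, hg]; simp
    have hdet1 : ∀ ψ : Matrix (Fin 2) (Fin 2) ℝ, ((g⁻¹)ᵀ * ψ * g⁻¹).det = ψ.det := by
      intro ψ
      rw [Matrix.det_mul, Matrix.det_mul, Matrix.det_transpose, hdetinv]; ring
    refine ⟨hdet1 θ, hdet1 θ', ?_⟩
    have hinv : ((g⁻¹)ᵀ * θ * g⁻¹)⁻¹ = g * θ⁻¹ * gᵀ := by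
      rw [Matrix.mul_inv_rev, Matrix.mul_inv_rev, Matrix.nonsing_inv_nonsing_inv g hug,
        Matrix.transpose_nonsing_inv, Matrix.nonsing_inv_nonsing_inv gᵀ hugt,
        Matrix.mul_assoc]
    rw [hinv]
    have h2 : (g⁻¹)ᵀ * θ' * g⁻¹ * (g * θ⁻¹ * gᵀ) = (g⁻¹)ᵀ * (θ' * θ⁻¹) * gᵀ := by
      calc (g⁻¹)ᵀ * θ' * g⁻¹ * (g * θ⁻¹ * gᵀ)
          = (g⁻¹)ᵀ * θ' * (g⁻¹ * g) * θ⁻¹ * gᵀ := by noncomm_ring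
        _ = (g⁻¹)ᵀ * (θ' * θ⁻¹) * gᵀ := by
            rw [Matrix.nonsing_inv_mul g hug, Matrix.mul_one]; noncomm_ring
    rw [h2, Matrix.trace_mul_comm]
    rw [show gᵀ * ((g⁻¹)ᵀ * (θ' * θ⁻¹)) = (gᵀ * (g⁻¹)ᵀ) * (θ' * θ⁻¹) by noncomm_ring,
      ← Matrix.transpose_mul, Matrix.nonsing_inv_mul g hug, Matrix.transpose_one,
      Matrix.one_mul]
  · intro θ₁ θ₂ θ₁' θ₂' hθ₁ hθ₂ hθ₁' hθ₂' hd₁ hd₂ htrc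
    obtain ⟨k₁, hdk₁, hk₁⟩ := chol θ₁ hθ₁
    obtain ⟨k₁', hdk₁', hk₁'⟩ := chol θ₁' hθ₁'
    rw [← hd₁] at hk₁'
    set s := Real.sqrt θ₁.det with hs'
    have hs : 0 < s := Real.sqrt_pos.2 hθ₁.det_pos
    have huk₁ : IsUnit k₁.det := by rw [hdk₁]; exact isUnit_one
    have huk₁' : IsUnit k₁'.det := by rw [hdk₁']; exact isUnit_one
    set M := k₁ * θ₂ * k₁ᵀ with hM'
    set M' := k₁' * θ₂' * k₁'ᵀ with hM''
    have hMsymT : Mᵀ = M := by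
      rw [hM', Matrix.transpose_mul, Matrix.transpose_mul, Matrix.transpose_transpose,
        sym_tr θ₂ hθ₂.1]
      noncomm_ring
    have hM'symT : M'ᵀ = M' := by
      rw [hM'', Matrix.transpose_mul, Matrix.transpose_mul, Matrix.transpose_transpose,
        sym_tr θ₂' hθ₂'.1]
      noncomm_ring
    have hMsym : M 1 0 = M 0 1 := (congr_fun (congr_fun hMsymT 1) 0).symm
    have hM'sym : M' 1 0 = M' 0 1 := (congr_fun (congr_fun hM'symT 1) 0).symm
    have hMtr : M.trace = M'.trace := by
      rw [hM', hM'', trace_key θ₁ θ₂ k₁ s hs.ne' huk₁ hk₁,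
        trace_key θ₁' θ₂' k₁' s hs.ne' huk₁' hk₁', htrc]
    have hMdet : M.det = M'.det := by
      rw [hM', hM'', Matrix.det_mul, Matrix.det_mul, Matrix.det_mul, Matrix.det_mul,
        Matrix.det_transpose, Matrix.det_transpose, hdk₁, hdk₁', hd₂]
    obtain ⟨O, hdO, hOO, hOM⟩ := rot M M' hMsym hM'sym hMtr hMdet
    have hOO2 : O * Oᵀ = 1 := mul_eq_one_comm.2 hOO
    set K := k₁'⁻¹ * O * k₁ with hK'
    have hdK : K.det = 1 := by
      rw [hK', Matrix.det_mul, Matrix.det_mul, Matrix.det_nonsing_inv, hdk₁, hdk₁', hdO]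
      simp
    have hKt : Kᵀ = k₁ᵀ * Oᵀ * (k₁'ᵀ)⁻¹ := by
      rw [hK', Matrix.transpose_mul, Matrix.transpose_mul, Matrix.transpose_nonsing_inv,
        Matrix.mul_assoc]
    have huk₁t' : IsUnit k₁'ᵀ.det := by rwa [Matrix.det_transpose]
    have hcongr : ∀ ψ ψ' : Matrix (Fin 2) (Fin 2) ℝ,
        O * (k₁ * ψ * k₁ᵀ) * Oᵀ = k₁' * ψ' * k₁'ᵀ → K * ψ * Kᵀ = ψ' := by
      intro ψ ψ' h
      rw [hK', hKt]
      calc k₁'⁻¹ * O * k₁ * ψ * (k₁ᵀ * Oᵀ * (k₁'ᵀ)⁻¹)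
          = k₁'⁻¹ * (O * (k₁ * ψ * k₁ᵀ) * Oᵀ) * (k₁'ᵀ)⁻¹ := by noncomm_ring
        _ = k₁'⁻¹ * (k₁' * ψ' * k₁'ᵀ) * (k₁'ᵀ)⁻¹ := by rw [h]
        _ = (k₁'⁻¹ * k₁') * (ψ' * (k₁'ᵀ * (k₁'ᵀ)⁻¹)) := by noncomm_ring
        _ = ψ' := by
            rw [Matrix.nonsing_inv_mul k₁' huk₁', Matrix.mul_nonsing_inv k₁'ᵀ huk₁t',
              Matrix.one_mul, Matrix.mul_one]
    have hKθ₁ : K * θ₁ * Kᵀ = θ₁' := by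
      apply hcongr
      rw [hk₁, hk₁', Matrix.mul_smul, Matrix.mul_one, Matrix.smul_mul, hOO2]
    have hKθ₂ : K * θ₂ * Kᵀ = θ₂' := by
      apply hcongr
      rw [← hM', ← hM'', hOM]
    have huKt : IsUnit Kᵀ.det := by
      rw [Matrix.det_transpose, hdK]; exact isUnit_one
    refine ⟨(Kᵀ)⁻¹, ?_, ?_, ?_⟩
    · rw [Matrix.det_nonsing_inv, Matrix.det_transpose, hdK]; simp
    · rw [Matrix.nonsing_inv_nonsing_inv Kᵀ huKt, Matrix.transpose_transpose]
      exact hKθ₁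
    · rw [Matrix.nonsing_inv_nonsing_inv Kᵀ huKt, Matrix.transpose_transpose]
      exact hKθ₂
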